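/- If in addition \(|q| < |\zeta|^2\), then the Tate x-coordinate \(x(\zeta) = \sum_{n=0}^{\infty} \frac{q^n \zeta}{(1 - q^n \zeta)^2} + \sum_{n=1}^{\infty} \frac{q^{-n} \zeta}{(1 - q^{-n} \zeta)^2} - 2\sum_{n=1}^{\infty} \frac{n q^n}{1 - q^n}\) satisfies the exact equality \(|x(\zeta)| = |\zeta|\). -/

import Mathlib

open IsUltrametricDist

section aux

variable {K : Type*} [NormedField K]

private lemma norm_sub_le_max' (hu : IsUltrametricDist K) (x y : K) :
    ‖x - y‖ ≤ max ‖x‖ ‖y‖ := by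
  simpa [sub_eq_add_neg] using norm_add_le_max x (-y)

private lemma aux_one_sub_lt (hu : IsUltrametricDist K) {x : K} (h : ‖x‖ < 1) :
    ‖1 - x‖ = 1 := by
  have h1 : ‖1 - x‖ ≤ 1 := by
    refine le_trans (norm_sub_le_max' hu 1 x) ?_
    simp [h.le]
  refine le_antisymm h1 ?_
  by_contra hc
  push_neg at hc
  have : (1 : ℝ) = ‖(1 - x) + x‖ := by norm_num
  have := this.trans_le (norm_add_le_max (1 - x) x)
  exact absurd this (by simp [not_le, hc, h])

private lemma aux_one_sub_gt (hu : IsUltrametricDist K) {x : K} (h : 1 < ‖x‖) :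
    ‖1 - x‖ = ‖x‖ := by
  have h1 : ‖1 - x‖ ≤ ‖x‖ := by
    refine le_trans (norm_sub_le_max' hu 1 x) ?_
    simp [h.le]
  refine le_antisymm h1 ?_
  by_contra hc
  push_neg at hc
  have : ‖x‖ = ‖(x - 1) + 1‖ := by norm_num
  have := this.trans_le (norm_add_le_max (x - 1) 1)
  rw [norm_sub_rev x 1] at this
  exact absurd this (by simp [not_le, hc, h])

end aux

/-- Key computation in the proof of Theorem 1.5: for a complete nonarchimedean field `K`,
`q ∈ K` with `0 < |q| < 1` and `ζ ∈ K` with `|q| < |ζ| < 1`, if moreover `|q| < |ζ|²`,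
then the Tate x-coordinate
`x(ζ) = ∑_{n≥0} qⁿζ/(1-qⁿζ)² + ∑_{n≥1} q⁻ⁿζ/(1-q⁻ⁿζ)² - 2·∑_{n≥1} n·qⁿ/(1-qⁿ)`
satisfies the exact equality `|x(ζ)| = |ζ|`. -/
theorem tate_x_coordinate_norm_eq {K : Type*} [NormedField K] [CompleteSpace K]
    (hu : IsUltrametricDist K) (q ζ : K)
    (hq0 : 0 < ‖q‖) (hq1 : ‖q‖ < 1) (hζl : ‖q‖ < ‖ζ‖) (hζu : ‖ζ‖ < 1)
    (hsq : ‖q‖ < ‖ζ‖ ^ 2) :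
    ‖(∑' n : ℕ, q ^ n * ζ / (1 - q ^ n * ζ) ^ 2)
        + (∑' n : ℕ, q⁻¹ ^ (n + 1) * ζ / (1 - q⁻¹ ^ (n + 1) * ζ) ^ 2)
        - (2 : K) * ∑' n : ℕ, ((n + 1) • q ^ (n + 1)) / (1 - q ^ (n + 1))‖
      = ‖ζ‖ := by
  haveI := hu
  have hζ0 : 0 < ‖ζ‖ := hq0.trans hζl
  have hq' : q ≠ 0 := by simpa using hq0.ne'
  set f : ℕ → K := fun n => q ^ n * ζ / (1 - q ^ n * ζ) ^ 2 with hf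
  -- norm of terms of first sum
  have hfn : ∀ n, ‖f n‖ = ‖q‖ ^ n * ‖ζ‖ := by
    intro n
    have hlt : ‖q ^ n * ζ‖ < 1 := by
      rw [norm_mul, norm_pow]
      calc ‖q‖ ^ n * ‖ζ‖ ≤ 1 * ‖ζ‖ := by
            gcongr
            exact pow_le_one₀ hq0.le hq1.le
        _ < 1 := by simpa using hζu
    rw [hf]
    simp only [norm_div, norm_mul, norm_pow, aux_one_sub_gt]
    rw [aux_one_sub_lt hu hlt]
    simp
  -- summability of first sum
  have hsum : Summable f := by
    refine NonarchimedeanAddGroup.summable_of_tendsto_cofinite_zero ?_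
    rw [Nat.cofinite_eq_atTop]
    refine squeeze_zero_norm (a := fun n => ‖q‖ ^ n * ‖ζ‖) (fun n => (hfn n).le) ?_
    simpa using
      (tendsto_pow_atTop_nhds_zero_of_lt_one hq0.le hq1).mul_const ‖ζ‖
  have hsplit : (∑' n : ℕ, f n) = f 0 + ∑' n : ℕ, f (n + 1) := Summable.tsum_eq_zero_add hsum
  have hf0 : ‖f 0‖ = ‖ζ‖ := by simpa using hfn 0
  -- bound on tail of first sum
  have hT1 : ‖∑' n : ℕ, f (n + 1)‖ ≤ ‖q‖ * ‖ζ‖ := by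
    refine norm_tsum_le_of_forall_le_of_nonneg (by positivity) (fun n => ?_)
    rw [hfn]
    gcongr
    simpa using pow_le_pow_of_le_one hq0.le hq1.le (Nat.le_add_left 1 n)
  -- bound on second sum
  have hT2 : ‖∑' n : ℕ, q⁻¹ ^ (n + 1) * ζ / (1 - q⁻¹ ^ (n + 1) * ζ) ^ 2‖ ≤ ‖q‖ / ‖ζ‖ := by
    refine norm_tsum_le_of_forall_le_of_nonneg (by positivity) (fun n => ?_)
    have hnum : ‖q⁻¹ ^ (n + 1) * ζ‖ = ‖ζ‖ / ‖q‖ ^ (n + 1) := by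
      rw [norm_mul, norm_pow, norm_inv]
      field_simp
      rw [← mul_pow, one_div, inv_mul_cancel₀ hq0.ne', one_pow]
    have hgt : 1 < ‖q⁻¹ ^ (n + 1) * ζ‖ := by
      rw [hnum]
      rw [lt_div_iff₀ (by positivity)]
      calc 1 * ‖q‖ ^ (n + 1) ≤ ‖q‖ := by
            simpa using pow_le_pow_of_le_one hq0.le hq1.le (by omega : 1 ≤ n + 1)
        _ < ‖ζ‖ := hζl
    rw [norm_div, norm_pow, aux_one_sub_gt hu hgt, hnum]
    have hqp : (0:ℝ) < ‖q‖ ^ (n + 1) := by positivity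
    have heq : ‖ζ‖ / ‖q‖ ^ (n + 1) / (‖ζ‖ / ‖q‖ ^ (n + 1)) ^ 2 = ‖q‖ ^ (n + 1) / ‖ζ‖ := by
      field_simp
    rw [heq]
    gcongr
    simpa using pow_le_pow_of_le_one hq0.le hq1.le (Nat.le_add_left 1 n)
  -- bound on third sum
  have h2norm : ‖(2 : K)‖ ≤ 1 := by
    have : (2 : K) = 1 + 1 := by norm_num
    rw [this]
    simpa using norm_add_le_max (1 : K) 1
  have hT3 : ‖(2 : K) * ∑' n : ℕ, ((n + 1) • q ^ (n + 1)) / (1 - q ^ (n + 1))‖ ≤ ‖q‖ := by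
    rw [norm_mul]
    have hb : ‖∑' n : ℕ, ((n + 1) • q ^ (n + 1)) / (1 - q ^ (n + 1))‖ ≤ ‖q‖ := by
      refine norm_tsum_le_of_forall_le_of_nonneg hq0.le (fun n => ?_)
      have hd : ‖1 - q ^ (n + 1)‖ = 1 := by
        refine aux_one_sub_lt hu ?_
        rw [norm_pow]
        exact lt_of_le_of_lt (by simpa using pow_le_pow_of_le_one hq0.le hq1.le (Nat.le_add_left 1 n)) hq1
      rw [norm_div, hd, div_one]
      calc ‖(n + 1) • q ^ (n + 1)‖ ≤ ‖q ^ (n + 1)‖ := norm_nsmul_le _ _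
        _ ≤ ‖q‖ := by
            rw [norm_pow]
            simpa using pow_le_pow_of_le_one hq0.le hq1.le (Nat.le_add_left 1 n)
    calc ‖(2 : K)‖ * ‖∑' n : ℕ, ((n + 1) • q ^ (n + 1)) / (1 - q ^ (n + 1))‖
        ≤ 1 * ‖q‖ := mul_le_mul h2norm hb (norm_nonneg _) zero_le_one
      _ = ‖q‖ := one_mul _
  -- combine: the expression is f 0 + (small remainder)
  set T1 := ∑' n : ℕ, f (n + 1)
  set T2 := ∑' n : ℕ, q⁻¹ ^ (n + 1) * ζ / (1 - q⁻¹ ^ (n + 1) * ζ) ^ 2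
  set T3 := (2 : K) * ∑' n : ℕ, ((n + 1) • q ^ (n + 1)) / (1 - q ^ (n + 1))
  have hrw : (∑' n : ℕ, f n) + T2 - T3 = f 0 + (T1 + T2 - T3) := by
    rw [hsplit]; ring
  rw [hrw]
  have hR : ‖T1 + T2 - T3‖ < ‖ζ‖ := by
    have h1 : ‖q‖ * ‖ζ‖ < ‖ζ‖ := by
      calc ‖q‖ * ‖ζ‖ < 1 * ‖ζ‖ := by gcongr
        _ = ‖ζ‖ := one_mul _
    have h2 : ‖q‖ / ‖ζ‖ < ‖ζ‖ := by
      rw [div_lt_iff₀ hζ0, ← sq]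
      exact hsq
    have h3 : ‖q‖ < ‖ζ‖ := hζl
    calc ‖T1 + T2 - T3‖ ≤ max ‖T1 + T2‖ ‖T3‖ := norm_sub_le_max' hu _ _
      _ ≤ max (max ‖T1‖ ‖T2‖) ‖T3‖ := by gcongr; exact norm_add_le_max _ _
      _ < ‖ζ‖ := by
          rw [max_lt_iff, max_lt_iff]
          exact ⟨⟨lt_of_le_of_lt hT1 h1, lt_of_le_of_lt hT2 h2⟩, lt_of_le_of_lt hT3 h3⟩
  rw [norm_add_eq_max_of_norm_ne_norm (by rw [hf0]; exact fun h => absurd h.symm hR.ne),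
    hf0, max_eq_left (hf0 ▸ hR.le)]
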